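/- For every finite tree T (a connected acyclic simple graph), the 2-packing number equals the domination number: ρ₂(T) = γ(T). -/

import Mathlib

open SimpleGraph

namespace MeirMoonAux

variable {V : Type*} {G : SimpleGraph V}

/-- Closed neighborhood. -/
def Cl (G : SimpleGraph V) (v : V) : Set V := insert v (G.neighborSet v)

lemma mem_Cl {G : SimpleGraph V} {v z : V} : z ∈ Cl G v ↔ z = v ∨ G.Adj v z := by
  simp [Cl]

lemma self_mem_Cl {G : SimpleGraph V} {v : V} : v ∈ Cl G v := mem_Cl.mpr (Or.inl rfl)

lemma mem_Cl_comm {G : SimpleGraph V} {v z : V} : z ∈ Cl G v ↔ v ∈ Cl G z := by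
  rw [mem_Cl, mem_Cl]
  constructor
  · rintro (h | h)
    · exact Or.inl h.symm
    · exact Or.inr h.symm
  · rintro (h | h)
    · exact Or.inl h.symm
    · exact Or.inr h.symm

/-- Dominated set. -/
def Dom (G : SimpleGraph V) (S : Set V) : Set V := {u | ∃ v ∈ S, u ∈ Cl G v}

lemma Dom_mono {G : SimpleGraph V} {S T : Set V} (h : S ⊆ T) : Dom G S ⊆ Dom G T := by
  rintro u ⟨v, hv, hvu⟩; exact ⟨v, h hv, hvu⟩

lemma isPath_concat {u v w : V} {p : G.Walk u v} (hp : p.IsPath) (h : G.Adj v w)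
    (hw : w ∉ p.support) : (p.concat h).IsPath := by
  rw [Walk.isPath_def, Walk.support_concat, List.nodup_append']
  refine ⟨hp.support_nodup, List.nodup_singleton w, ?_⟩
  intro a ha hav
  rw [List.mem_singleton] at hav
  exact hw (hav ▸ ha)

lemma length_of_isPath (hA : G.IsAcyclic) {u v : V} {p : G.Walk u v} (hp : p.IsPath) :
    p.length = G.dist u v := by
  obtain ⟨q, hq, hql⟩ := (p.reachable).exists_path_of_dist
  have := hA.path_unique ⟨p, hp⟩ ⟨q, hq⟩
  rw [show p = q from congrArg Subtype.val this]
  exact hql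

lemma exists_parent (hA : G.IsAcyclic) (hC : G.Connected) (r : V) {v : V} (hv : v ≠ r) :
    ∃ w, G.Adj w v ∧ G.dist r w + 1 = G.dist r v := by
  obtain ⟨p, hp, hl⟩ := (hC v r).exists_path_of_dist
  have hpos : 0 < G.dist r v := hC.pos_dist_of_ne (Ne.symm hv)
  cases p with
  | nil => exact absurd rfl hv
  | cons h q =>
    rename_i w
    refine ⟨w, h.symm, ?_⟩
    have hq : q.IsPath := hp.of_cons
    have h1 : q.length = G.dist w r := length_of_isPath hA hq
    have h2 : G.dist r v ≤ G.dist r w + G.dist w v := hC.dist_triangle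
    have h3 : G.dist w v = 1 := dist_eq_one_iff_adj.mpr h.symm
    have h4 : (Walk.cons h q).length = G.dist v r := hl
    rw [Walk.length_cons] at h4
    have h5 : G.dist v r = G.dist r v := dist_comm
    have h6 : G.dist w r = G.dist r w := dist_comm
    omega

lemma adj_dist (hA : G.IsAcyclic) (hC : G.Connected) (r : V) {a b : V} (hab : G.Adj a b) :
    G.dist r a + 1 = G.dist r b ∨ G.dist r b + 1 = G.dist r a := by
  classical
  obtain ⟨q, hq, hql⟩ := (hC r b).exists_path_of_dist
  by_cases ha : a ∈ q.support
  · left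
    have h1 : (q.takeUntil a ha).length = G.dist r a :=
      length_of_isPath hA (hq.takeUntil ha)
    have h2 : (q.dropUntil a ha).length = G.dist a b :=
      length_of_isPath hA (hq.dropUntil ha)
    have h3 : G.dist a b = 1 := dist_eq_one_iff_adj.mpr hab
    have h4 := congrArg Walk.length (q.take_spec ha)
    rw [Walk.length_append] at h4
    omega
  · right
    have hP : (q.concat hab.symm).IsPath := isPath_concat hq hab.symm ha
    have := length_of_isPath hA hP
    rw [Walk.length_concat] at this
    omega

lemma parent_unique (hA : G.IsAcyclic) (hC : G.Connected) (r : V) {a b w : V}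
    (ha : G.Adj a w) (hb : G.Adj b w)
    (hda : G.dist r a + 1 = G.dist r w) (hdb : G.dist r b + 1 = G.dist r w) : a = b := by
  classical
  have build : ∀ (c : V) (hc : G.Adj c w), G.dist r c + 1 = G.dist r w →
      ∃ (p : G.Walk r c), ((p.concat hc).IsPath) := by
    intro c hc hdc
    obtain ⟨p, hp, hl⟩ := (hC r c).exists_path_of_dist
    have hw : w ∉ p.support := by
      intro hmem
      have h1 : (p.takeUntil w hmem).length = G.dist r w :=
        length_of_isPath hA (hp.takeUntil hmem)
      have h2 := Walk.length_takeUntil_le p hmem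
      omega
    exact ⟨p, isPath_concat hp hc hw⟩
  obtain ⟨pa, hPa⟩ := build a ha hda
  obtain ⟨pb, hPb⟩ := build b hb hdb
  have := hA.path_unique ⟨pa.concat ha, hPa⟩ ⟨pb.concat hb, hPb⟩
  have heq : pa.concat ha = pb.concat hb := congrArg Subtype.val this
  obtain ⟨hv, -⟩ := Walk.concat_inj heq
  exact hv

lemma pack_step (hA : G.IsAcyclic) (hC : G.Connected) (r : V) {S : Set V} {u p s : V}
    (hu : u ∉ Dom G S) (hs : s ∈ S) (hsp : G.Adj s p)
    (hd : G.dist r s + 1 = G.dist r p) (hup : G.dist r u ≤ G.dist r p) :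
    Disjoint (Cl G u) (Cl G p) := by
  have hnd : ∀ t ∈ S, u ∉ Cl G t := fun t ht hc => hu ⟨t, ht, hc⟩
  rw [Set.disjoint_left]
  intro z hzu hzp
  rw [mem_Cl] at hzu hzp
  have hadjcase : ∀ (hadj : G.Adj u p), False := by
    intro hadj
    rcases adj_dist hA hC r hadj with h | h
    · have : u = s := parent_unique hA hC r hadj hsp h hd
      exact hnd s hs (this ▸ self_mem_Cl)
    · omega
  rcases hzu with hzu | hzu <;> rcases hzp with hzp | hzp
  · -- z = u and z = p
    have : u = p := hzu ▸ hzp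
    exact hnd s hs (mem_Cl.mpr (Or.inr (this ▸ hsp)))
  · -- z = u, adj p z
    exact hadjcase (hzu ▸ hzp).symm
  · -- adj u z, z = p
    exact hadjcase (hzp ▸ hzu)
  · -- adj u z, adj p z
    rcases adj_dist hA hC r hzp with h | h
    · -- d p + 1 = d z?? careful: adj_dist r (p z) gives d p + 1 = d z ∨ d z + 1 = d p
      -- first disjunct: d p + 1 = d z
      rcases adj_dist hA hC r hzu with h' | h'
      · -- d u + 1 = d z : u and p both parents of z
        have : u = p := parent_unique hA hC r hzu hzp (by omega) (by omega)
        exact hnd s hs (mem_Cl.mpr (Or.inr (this ▸ hsp)))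
      · -- d z + 1 = d u : d u = d p + 2, contradiction
        omega
    · -- d z + 1 = d p : z is a parent of p, so z = s
      have : z = s := parent_unique hA hC r hzp.symm hsp h hd
      exact hnd s hs (mem_Cl.mpr (Or.inr (this ▸ hzu).symm))

section Key

variable [Fintype V]

lemma key (hA : G.IsAcyclic) (hC : G.Connected) (r : V) :
    ∀ (n : ℕ) (S P : Set V),
    (Set.univ \ Dom G S).ncard ≤ n →
    P.Pairwise (fun x y => Disjoint (Cl G x) (Cl G y)) →
    P.ncard = S.ncard →
    (∀ p ∈ P, (∃ s ∈ S, G.Adj s p ∧ G.dist r s + 1 = G.dist r p) ∨ Dom G S = Set.univ) →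
    (∀ p ∈ P, ∀ v, v ∉ Dom G S → G.dist r v ≤ G.dist r p) →
    ∃ (S' P' : Set V), Dom G S' = Set.univ ∧
      P'.Pairwise (fun x y => Disjoint (Cl G x) (Cl G y)) ∧ P'.ncard = S'.ncard := by
  intro n
  induction n with
  | zero =>
    intro S P hcard hpack hnum _ _
    have hempty : (Set.univ \ Dom G S) = ∅ := by
      rw [← Set.ncard_eq_zero (Set.toFinite _)]
      omega
    have hdom : Dom G S = Set.univ := by
      have := Set.diff_eq_empty.mp hempty
      exact Set.eq_univ_of_univ_subset this
    exact ⟨S, P, hdom, hpack, hnum⟩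
  | succ n ih =>
    intro S P hcard hpack hnum hiii hiv
    by_cases hdom : Dom G S = Set.univ
    · exact ⟨S, P, hdom, hpack, hnum⟩
    · have hne : (Set.univ \ Dom G S).Nonempty := by
        rw [Set.diff_nonempty]
        intro hsub
        exact hdom (Set.eq_univ_of_univ_subset hsub)
      obtain ⟨u, hu, hmax⟩ := Set.exists_max_image _ (G.dist r) (Set.toFinite _) hne
      have hu' : u ∉ Dom G S := hu.2
      have hPdom : ∀ p ∈ P, p ∈ Dom G S := by
        intro p hp
        rcases hiii p hp with ⟨s, hs, hsp, -⟩ | h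
        · exact ⟨s, hs, mem_Cl.mpr (Or.inr hsp)⟩
        · rw [h]; trivial
      have huP : u ∉ P := fun h => hu' (hPdom u h)
      have hdisj : ∀ p ∈ P, Disjoint (Cl G u) (Cl G p) := by
        intro p hp
        rcases hiii p hp with ⟨s, hs, hsp, hds⟩ | h
        · exact pack_step hA hC r hu' hs hsp hds (hiv p hp u hu')
        · exact absurd h hdom
      have hmax' : ∀ v, v ∉ Dom G S → G.dist r v ≤ G.dist r u := by
        intro v hv
        exact hmax v ⟨trivial, hv⟩
      by_cases hur : u = r
      · -- finishing move: every undominated vertex is r itself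
        have huS : u ∉ S := fun h => hu' ⟨u, h, self_mem_Cl⟩
        refine ⟨insert u S, insert u P, ?_, ?_, ?_⟩
        · apply Set.eq_univ_of_forall
          intro v
          by_cases hv : v ∈ Dom G S
          · exact Dom_mono (Set.subset_insert _ _) hv
          · have h0 : G.dist r v ≤ G.dist r u := hmax' v hv
            rw [hur] at h0 ⊢
            have : G.dist r r = 0 := SimpleGraph.dist_self
            have hv0 : G.dist r v = 0 := by omega
            have : r = v := (hC.dist_eq_zero_iff).mp hv0
            exact ⟨r, Set.mem_insert _ _, this ▸ self_mem_Cl⟩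
        · rw [Set.pairwise_insert_of_notMem huP]
          exact ⟨hpack, fun p hp => ⟨hdisj p hp, (hdisj p hp).symm⟩⟩
        · rw [Set.ncard_insert_of_notMem huP, Set.ncard_insert_of_notMem huS, hnum]
      · obtain ⟨w, hwv, hdw⟩ := exists_parent hA hC r hur
        have huw : u ∈ Cl G w := mem_Cl.mpr (Or.inr hwv)
        have hwS : w ∉ S := fun h => hu' ⟨w, h, huw⟩
        have huDom' : u ∈ Dom G (insert w S) := ⟨w, Set.mem_insert _ _, huw⟩
        apply ih (insert w S) (insert u P)
        · have hsub : (Set.univ \ Dom G (insert w S)) ⊆ (Set.univ \ Dom G S) \ {u} := by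
            intro v hv
            refine ⟨⟨trivial, fun hd => hv.2 (Dom_mono (Set.subset_insert _ _) hd)⟩, ?_⟩
            intro h
            rw [Set.mem_singleton_iff] at h
            exact hv.2 (h ▸ huDom')
          have h1 : ((Set.univ \ Dom G S) \ {u}).ncard < (Set.univ \ Dom G S).ncard :=
            Set.ncard_diff_singleton_lt_of_mem hu (Set.toFinite _)
          have h2 := Set.ncard_le_ncard hsub (Set.toFinite _)
          omega
        · rw [Set.pairwise_insert_of_notMem huP]
          exact ⟨hpack, fun p hp => ⟨hdisj p hp, (hdisj p hp).symm⟩⟩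
        · rw [Set.ncard_insert_of_notMem huP, Set.ncard_insert_of_notMem hwS, hnum]
        · intro p hp
          rcases Set.mem_insert_iff.mp hp with h | h
          · exact Or.inl ⟨w, Set.mem_insert _ _, h ▸ hwv, h ▸ hdw⟩
          · rcases hiii p h with ⟨s, hs, hsp, hds⟩ | hh
            · exact Or.inl ⟨s, Set.mem_insert_of_mem _ hs, hsp, hds⟩
            · exact absurd hh hdom
        · intro p hp v hv
          have hv' : v ∉ Dom G S := fun h => hv (Dom_mono (Set.subset_insert _ _) h)
          rcases Set.mem_insert_iff.mp hp with h | h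
          · exact h ▸ hmax' v hv'
          · exact hiv p h v hv'

end Key

end MeirMoonAux

/-- The domination number of a simple graph: minimum size of a set `S` such that the
closed neighborhoods of vertices of `S` cover all vertices. -/
noncomputable def gDomNum (V : Type*) [Fintype V] (G : SimpleGraph V) : ℕ :=
  sInf {n | ∃ S : Set V, (∀ u, ∃ v ∈ S, u ∈ insert v (G.neighborSet v)) ∧ S.ncard = n}

/-- The 2-packing number of a simple graph: maximum size of a set of vertices whose
closed neighborhoods are pairwise disjoint. -/
noncomputable def gTwoPackNum (V : Type*) [Fintype V] (G : SimpleGraph V) : ℕ :=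
  sSup {n | ∃ P : Set V,
    (P.Pairwise fun x y => Disjoint (insert x (G.neighborSet x)) (insert y (G.neighborSet y)))
    ∧ P.ncard = n}

section
open MeirMoonAux
/-- Meir–Moon: for every finite tree, the 2-packing number equals the domination number. -/
theorem stmt0 {V : Type*} [Fintype V] (G : SimpleGraph V) (hT : G.IsTree) :
    gTwoPackNum V G = gDomNum V G := by
  classical
  have hC : G.Connected := hT.1
  have hA : G.IsAcyclic := hT.2
  have hCl : ∀ v : V, Cl G v = insert v (G.neighborSet v) := fun _ => rfl
  obtain ⟨r⟩ : Nonempty V := hC.nonempty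
  have hbdd : BddAbove {n | ∃ P : Set V,
      (P.Pairwise fun x y => Disjoint (insert x (G.neighborSet x)) (insert y (G.neighborSet y)))
      ∧ P.ncard = n} := by
    refine ⟨Nat.card V, ?_⟩
    rintro n ⟨P, -, hn⟩
    rw [← hn, ← Set.ncard_univ]
    exact Set.ncard_le_ncard (Set.subset_univ P) (Set.toFinite _)
  -- Forward inequality: γ ≤ ρ₂
  have fwd : gDomNum V G ≤ gTwoPackNum V G := by
    obtain ⟨S', P', hdom', hpack', hnum'⟩ :=
      key hA hC r (Set.univ \ Dom G ∅).ncard ∅ ∅ le_rfl (Set.pairwise_empty _) rfl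
        (fun p hp => absurd hp (Set.notMem_empty p))
        (fun p hp => absurd hp (Set.notMem_empty p))
    have h1 : gDomNum V G ≤ S'.ncard := by
      apply Nat.sInf_le
      refine ⟨S', fun u => ?_, rfl⟩
      have : u ∈ Dom G S' := by rw [hdom']; trivial
      obtain ⟨v, hv, hcl⟩ := this
      exact ⟨v, hv, hcl⟩
    have h2 : P'.ncard ≤ gTwoPackNum V G := by
      apply le_csSup hbdd
      exact ⟨P', hpack', rfl⟩
    omega
  -- Reverse inequality: ρ₂ ≤ γ
  have rev : gTwoPackNum V G ≤ gDomNum V G := by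
    have hmem : gDomNum V G ∈ {n | ∃ S : Set V,
        (∀ u, ∃ v ∈ S, u ∈ insert v (G.neighborSet v)) ∧ S.ncard = n} := by
      apply Nat.sInf_mem
      exact ⟨(Set.univ : Set V).ncard, Set.univ, fun u => ⟨u, trivial, Set.mem_insert _ _⟩, rfl⟩
    obtain ⟨S0, hS0dom, hS0card⟩ := hmem
    unfold gTwoPackNum
    apply csSup_le
    · exact ⟨0, ∅, Set.pairwise_empty _, Set.ncard_empty _⟩
    rintro n ⟨P, hPpack, rfl⟩
    rw [← hS0card]
    choose f hf1 hf2 using hS0dom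
    apply Set.ncard_le_ncard_of_injOn f (fun a _ => hf1 a) _ (Set.toFinite _)
    intro x hx y hy hxy
    by_contra hne
    have h1 : f x ∈ Cl G x := mem_Cl_comm.mp (hf2 x)
    have h2 : f x ∈ Cl G y := hxy ▸ mem_Cl_comm.mp (hf2 y)
    exact Set.disjoint_left.mp (hPpack hx hy hne) h1 h2
  omega

end
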